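/- Let K be a nonempty finite set partitioned into a nonempty subset K_W and a subset K_B, and let M ∈ ℝ^{K×K} satisfy: (i) |M_{kk}| = Σ_{m≠k} |M_{km}| for every k ∈ K_B; (ii) |M_{kk}| > Σ_{m≠k} |M_{km}| for every k ∈ K_W; and (iii) the flow condition: for every nonempty subset K̃_B ⊆ K_B there exist k ∈ K̃_B and m ∈ K ∖ K̃_B with M_{km} ≠ 0. Then M is invertible. (This generalizes the invertibility of irreducibly diagonally dominant matrices: no irreducibility of M is assumed.) -/

import Mathlib

/-- A finite matrix which is diagonally dominant (with equality on K_B and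
strict inequality on K_W) and satisfies the flow condition is invertible; no
irreducibility is assumed. -/
theorem stmt_8 {K : Type*} [Fintype K] [DecidableEq K] [Nonempty K]
    (KW KB : Set K) (hKW : KW.Nonempty)
    (hpart : ∀ k : K, k ∈ KW ↔ k ∉ KB)
    (M : Matrix K K ℝ)
    (hB : ∀ k ∈ KB, |M k k| = ∑ m ∈ Finset.univ.erase k, |M k m|)
    (hW : ∀ k ∈ KW, ∑ m ∈ Finset.univ.erase k, |M k m| < |M k k|)
    (hflow : ∀ S : Set K, S ⊆ KB → S.Nonempty →
      ∃ k ∈ S, ∃ m, m ∉ S ∧ M k m ≠ 0) :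
    IsUnit M := by
  rw [Matrix.isUnit_iff_isUnit_det, isUnit_iff_ne_zero]
  intro hdet
  obtain ⟨v, hv, hMv⟩ := Matrix.exists_mulVec_eq_zero_iff.mpr hdet
  obtain ⟨k₀, -, hk₀⟩ := Finset.exists_max_image Finset.univ (fun m => |v m|)
    ⟨Classical.arbitrary K, Finset.mem_univ _⟩
  set c := |v k₀| with hc
  have hcpos : 0 < c := by
    obtain ⟨j, hj⟩ := Function.ne_iff.mp hv
    exact lt_of_lt_of_le (abs_pos.mpr hj) (hk₀ j (Finset.mem_univ _))
  set S : Set K := {k | |v k| = c} with hSdef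
  have hrow : ∀ k, ∑ m, M k m * v m = 0 := fun k => congrFun hMv k
  have key : ∀ k ∈ S, k ∈ KB ∧ ∀ m, M k m ≠ 0 → m ∈ S := by
    intro k hk
    have hvk : |v k| = c := hk
    have h1 : |M k k| * c ≤ ∑ m ∈ Finset.univ.erase k, |M k m| * |v m| := by
      have hsplit : M k k * v k = -∑ m ∈ Finset.univ.erase k, M k m * v m := by
        have h := hrow k
        rw [← Finset.add_sum_erase _ _ (Finset.mem_univ k)] at h
        linarith
      calc |M k k| * c = |M k k * v k| := by rw [abs_mul, hvk]
        _ = |∑ m ∈ Finset.univ.erase k, M k m * v m| := by rw [hsplit, abs_neg]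
        _ ≤ ∑ m ∈ Finset.univ.erase k, |M k m * v m| := Finset.abs_sum_le_sum_abs _ _
        _ = ∑ m ∈ Finset.univ.erase k, |M k m| * |v m| := by simp [abs_mul]
    have h2 : ∑ m ∈ Finset.univ.erase k, |M k m| * |v m|
        ≤ ∑ m ∈ Finset.univ.erase k, |M k m| * c :=
      Finset.sum_le_sum fun m _ =>
        mul_le_mul_of_nonneg_left (hk₀ m (Finset.mem_univ m)) (abs_nonneg _)
    have hsumc : ∑ m ∈ Finset.univ.erase k, |M k m| * c
        = (∑ m ∈ Finset.univ.erase k, |M k m|) * c := by rw [Finset.sum_mul]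
    have hkB : k ∈ KB := by
      by_contra hkB
      have hWk := hW k ((hpart k).mpr hkB)
      nlinarith
    refine ⟨hkB, ?_⟩
    have hBk := hB k hkB
    have heq : ∑ m ∈ Finset.univ.erase k, |M k m| * |v m|
        = ∑ m ∈ Finset.univ.erase k, |M k m| * c := by
      apply le_antisymm h2
      rw [hsumc, ← hBk]; exact h1
    intro m hm
    by_cases hmk : m = k
    · rw [hmk]; exact hk
    · have hterm := (Finset.sum_eq_sum_iff_of_le
        (fun i _ => mul_le_mul_of_nonneg_left (hk₀ i (Finset.mem_univ i)) (abs_nonneg _))).mp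
        heq m (Finset.mem_erase.mpr ⟨hmk, Finset.mem_univ m⟩)
      have : |v m| = c := by
        have hMm : (0:ℝ) < |M k m| := abs_pos.mpr hm
        exact mul_left_cancel₀ (ne_of_gt hMm) hterm
      exact this
  have hSsub : S ⊆ KB := fun k hk => (key k hk).1
  obtain ⟨k, hkS, m, hmS, hMkm⟩ := hflow S hSsub ⟨k₀, rfl⟩
  exact hmS ((key k hkS).2 m hMkm)
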